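/- Fix Heston parameters v > 0, κ > 0, θ > 0, ξ > 0, ρ ∈ (−1,1) with κ > ρξ, and t ≥ 0. Then: (a) B(0,τ) = B(1,τ) = 0 for every τ > 0; (b) for every u ∈ (0,1) and τ > 0, B(u,τ) < 0; (c) for every u ∈ (u₋, u₊) with u ∉ [0,1], the map τ ↦ B(u,τ) is strictly increasing on (0,∞); (d) for every u ∈ (u₋, u₊), lim_{τ→∞} B(u,τ) = (κ − ρξu − d(u))/ξ² = V(u)/(κθ); consequently, for every u ∈ (u₋, u₊) with 2β_t·V(u) < κθ, one has 2β_t·B(u,τ) < 1 for all τ > 0. -/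

import Mathlib

open Filter Topology Set Asymptotics

/-- `η := √(ξ²(1−ρ²) + (2κ−ρξ)²)`. -/
noncomputable def etaH (κ ξ ρ : ℝ) : ℝ :=
  Real.sqrt (ξ ^ 2 * (1 - ρ ^ 2) + (2 * κ - ρ * ξ) ^ 2)

/-- `u₋ := (ξ − 2κρ − η)/(2ξ(1−ρ²))`. -/
noncomputable def uMinusH (κ ξ ρ : ℝ) : ℝ :=
  (ξ - 2 * κ * ρ - etaH κ ξ ρ) / (2 * ξ * (1 - ρ ^ 2))

/-- `u₊ := (ξ − 2κρ + η)/(2ξ(1−ρ²))`. -/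
noncomputable def uPlusH (κ ξ ρ : ℝ) : ℝ :=
  (ξ - 2 * κ * ρ + etaH κ ξ ρ) / (2 * ξ * (1 - ρ ^ 2))

/-- `d(u) := √((κ − ρξu)² + u ξ² (1 − u))`. -/
noncomputable def dH (κ ξ ρ : ℝ) (u : ℝ) : ℝ :=
  Real.sqrt ((κ - ρ * ξ * u) ^ 2 + u * ξ ^ 2 * (1 - u))

/-- `γ(u) := (κ − ρξu − d(u))/(κ − ρξu + d(u))`. -/
noncomputable def gammaH (κ ξ ρ : ℝ) (u : ℝ) : ℝ :=
  (κ - ρ * ξ * u - dH κ ξ ρ u) / (κ - ρ * ξ * u + dH κ ξ ρ u)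

/-- `V(u) := (κθ/ξ²)(κ − ρξu − d(u))`. -/
noncomputable def VH (κ θ ξ ρ : ℝ) (u : ℝ) : ℝ :=
  κ * θ / ξ ^ 2 * (κ - ρ * ξ * u - dH κ ξ ρ u)

/-- `β_t := (ξ²/(4κ))(1 − e^{−κt})`. -/
noncomputable def betaT (κ ξ t : ℝ) : ℝ :=
  ξ ^ 2 / (4 * κ) * (1 - Real.exp (-κ * t))

/-- `A(u,τ) := (κθ/ξ²)[(κ − ρξu − d(u))τ − 2 log((1 − γ(u)e^{−d(u)τ})/(1 − γ(u)))]`. -/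
noncomputable def AH (κ θ ξ ρ : ℝ) (u τ : ℝ) : ℝ :=
  κ * θ / ξ ^ 2 * ((κ - ρ * ξ * u - dH κ ξ ρ u) * τ -
    2 * Real.log ((1 - gammaH κ ξ ρ u * Real.exp (-dH κ ξ ρ u * τ)) / (1 - gammaH κ ξ ρ u)))

/-- `B(u,τ) := ((κ − ρξu − d(u))/ξ²)(1 − e^{−d(u)τ})/(1 − γ(u)e^{−d(u)τ})`. -/
noncomputable def BH (κ ξ ρ : ℝ) (u τ : ℝ) : ℝ :=
  (κ - ρ * ξ * u - dH κ ξ ρ u) / ξ ^ 2 *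
    ((1 - Real.exp (-dH κ ξ ρ u * τ)) / (1 - gammaH κ ξ ρ u * Real.exp (-dH κ ξ ρ u * τ)))


private lemma aux_Q_pos (κ ξ ρ u : ℝ) (hξ : 0 < ξ) (hρ2 : ρ^2 < 1)
    (h1 : uMinusH κ ξ ρ < u) (h2 : u < uPlusH κ ξ ρ) :
    0 < (κ - ρ*ξ*u)^2 + u * ξ^2 * (1-u) := by
  have hden : 0 < 2 * ξ * (1 - ρ^2) := by nlinarith
  have hη2 : (etaH κ ξ ρ)^2 = ξ^2*(1-ρ^2) + (2*κ - ρ*ξ)^2 :=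
    Real.sq_sqrt (by nlinarith [mul_nonneg (sq_nonneg ξ) (by linarith : (0:ℝ) ≤ 1 - ρ^2), sq_nonneg (2*κ - ρ*ξ)])
  rw [uMinusH, div_lt_iff₀ hden] at h1
  rw [uPlusH, lt_div_iff₀ hden] at h2
  have f1 : 0 < etaH κ ξ ρ + (2*ξ*(1-ρ^2)*u - (ξ - 2*κ*ρ)) := by nlinarith
  have f2 : 0 < etaH κ ξ ρ - (2*ξ*(1-ρ^2)*u - (ξ - 2*κ*ρ)) := by nlinarith
  nlinarith [mul_pos f1 f2, hη2, mul_pos hξ hξ, hρ2]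

private lemma aux_m_pos (κ ξ ρ u : ℝ) (hκ : 0 < κ) (hρ2 : ρ^2 < 1)
    (hκρξ : ρ * ξ < κ) (hQ : 0 < (κ - ρ*ξ*u)^2 + u * ξ^2 * (1-u)) :
    0 < κ - ρ * ξ * u := by
  by_contra h
  push_neg at h
  have hG : 0 ≤ (1-ρ^2)*(ρ*ξ*u) + (1+ρ^2)*κ - ρ*ξ := by nlinarith
  nlinarith [mul_nonneg (sq_nonneg ρ) hQ.le, mul_nonneg (by linarith : (0:ℝ) ≤ ρ*ξ*u - κ) hG,
    mul_pos hκ (by linarith : (0:ℝ) < κ - ρ*ξ)]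

private lemma aux_facts (κ ξ ρ u : ℝ) (hκ : 0 < κ) (hξ : 0 < ξ) (hρ2 : ρ^2 < 1)
    (hκρξ : ρ * ξ < κ) (h1 : uMinusH κ ξ ρ < u) (h2 : u < uPlusH κ ξ ρ) :
    0 < κ - ρ*ξ*u ∧ 0 < dH κ ξ ρ u ∧ (dH κ ξ ρ u)^2 = (κ - ρ*ξ*u)^2 + u*ξ^2*(1-u)
      ∧ -1 < gammaH κ ξ ρ u ∧ gammaH κ ξ ρ u < 1 := by
  have hQ := aux_Q_pos κ ξ ρ u hξ hρ2 h1 h2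
  have hm := aux_m_pos κ ξ ρ u hκ hρ2 hκρξ hQ
  have hd0 : 0 < dH κ ξ ρ u := Real.sqrt_pos.2 hQ
  have hd2 : (dH κ ξ ρ u)^2 = (κ - ρ*ξ*u)^2 + u*ξ^2*(1-u) := Real.sq_sqrt hQ.le
  refine ⟨hm, hd0, hd2, ?_, ?_⟩
  · rw [gammaH, lt_div_iff₀ (by linarith)]; linarith
  · rw [gammaH, div_lt_one (by linarith)]; linarith

set_option maxHeartbeats 1000000

/-- from the proof of Proposition 5.11 of the paper: for Heston parameters
with `κ > ρξ` and `t ≥ 0`: (a) `B(0,τ) = B(1,τ) = 0` for all `τ > 0`;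
(b) `B(u,τ) < 0` for `u ∈ (0,1)` and `τ > 0`;
(c) for `u ∈ (u₋, u₊)` with `u ∉ [0,1]`, `τ ↦ B(u,τ)` is strictly increasing on `(0,∞)`;
(d) for `u ∈ (u₋, u₊)`, `B(u,τ) → (κ − ρξu − d(u))/ξ² = V(u)/(κθ)` as `τ → ∞`; consequently,
for every `u ∈ (u₋, u₊)` with `2β_t V(u) < κθ`, `2β_t B(u,τ) < 1` for all `τ > 0`. -/
theorem statement19 (v κ θ ξ ρ t : ℝ) (hv : 0 < v) (hκ : 0 < κ) (hθ : 0 < θ) (hξ : 0 < ξ)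
    (hρ : ρ ∈ Set.Ioo (-1 : ℝ) 1) (hκρξ : ρ * ξ < κ) (ht : 0 ≤ t) :
    (∀ τ : ℝ, 0 < τ → BH κ ξ ρ 0 τ = 0 ∧ BH κ ξ ρ 1 τ = 0) ∧
      (∀ u ∈ Set.Ioo (0 : ℝ) 1, ∀ τ : ℝ, 0 < τ → BH κ ξ ρ u τ < 0) ∧
      (∀ u ∈ Set.Ioo (uMinusH κ ξ ρ) (uPlusH κ ξ ρ), u ∉ Set.Icc (0 : ℝ) 1 →
        StrictMonoOn (fun τ => BH κ ξ ρ u τ) (Set.Ioi 0)) ∧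
      (∀ u ∈ Set.Ioo (uMinusH κ ξ ρ) (uPlusH κ ξ ρ),
        Tendsto (fun τ => BH κ ξ ρ u τ) atTop (𝓝 ((κ - ρ * ξ * u - dH κ ξ ρ u) / ξ ^ 2)) ∧
        (κ - ρ * ξ * u - dH κ ξ ρ u) / ξ ^ 2 = VH κ θ ξ ρ u / (κ * θ)) ∧
      (∀ u ∈ Set.Ioo (uMinusH κ ξ ρ) (uPlusH κ ξ ρ),
        2 * betaT κ ξ t * VH κ θ ξ ρ u < κ * θ →
        ∀ τ : ℝ, 0 < τ → 2 * betaT κ ξ t * BH κ ξ ρ u τ < 1) := by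
  obtain ⟨hρ1, hρ2'⟩ := hρ
  have hρ2 : ρ^2 < 1 := by nlinarith
  have hξ2 : (0:ℝ) < ξ^2 := by positivity
  refine ⟨?_, ?_, ?_, ?_, ?_⟩
  · -- (a)
    intro τ hτ
    constructor
    · have hd : dH κ ξ ρ 0 = κ := by
        have h : (κ - ρ*ξ*0)^2 + 0 * ξ^2 * (1-0) = κ^2 := by ring
        rw [dH, h, Real.sqrt_sq hκ.le]
      simp [BH, hd]
    · have hd : dH κ ξ ρ 1 = κ - ρ*ξ := by
        have h : (κ - ρ*ξ*1)^2 + 1 * ξ^2 * (1-1) = (κ - ρ*ξ)^2 := by ring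
        rw [dH, h, Real.sqrt_sq (by linarith)]
      simp [BH, hd]
  · -- (b)
    intro u hu τ hτ
    obtain ⟨hu0, hu1⟩ := hu
    have hm : 0 < κ - ρ*ξ*u := by nlinarith
    have hp : 0 < u * ξ^2 * (1-u) := by
      apply mul_pos (mul_pos hu0 hξ2); linarith
    have hd2 : (dH κ ξ ρ u)^2 = (κ - ρ*ξ*u)^2 + u*ξ^2*(1-u) :=
      Real.sq_sqrt (by nlinarith [sq_nonneg (κ - ρ*ξ*u)])
    have hdnn : 0 ≤ dH κ ξ ρ u := Real.sqrt_nonneg _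
    have hmd : κ - ρ*ξ*u < dH κ ξ ρ u := by nlinarith
    have hγ1 : gammaH κ ξ ρ u < 1 := by
      rw [gammaH, div_lt_one (by linarith)]; linarith
    have hx0 : 0 < Real.exp (-dH κ ξ ρ u * τ) := Real.exp_pos _
    have hx1 : Real.exp (-dH κ ξ ρ u * τ) < 1 := by
      rw [Real.exp_lt_one_iff]; nlinarith
    have hden : 0 < 1 - gammaH κ ξ ρ u * Real.exp (-dH κ ξ ρ u * τ) := by
      linarith [mul_pos (sub_pos.2 hγ1) hx0]
    rw [BH]
    exact mul_neg_of_neg_of_pos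
      (div_neg_of_neg_of_pos (by linarith) hξ2)
      (div_pos (by linarith) hden)
  · -- (c)
    intro u hu hu01
    obtain ⟨hul, hur⟩ := hu
    obtain ⟨hm, hd0, hd2, hγ0', hγ1⟩ := aux_facts κ ξ ρ u hκ hξ hρ2 hκρξ hul hur
    have huu : 0 < u * (u - 1) := by
      rw [Set.mem_Icc] at hu01; push_neg at hu01
      rcases lt_or_ge u 0 with h | h
      · exact mul_pos_of_neg_of_neg h (by linarith)
      · exact mul_pos (by linarith [hu01 h]) (by linarith [hu01 h])
    have hmd : dH κ ξ ρ u < κ - ρ*ξ*u := by nlinarith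
    have hγ0 : 0 < gammaH κ ξ ρ u := by
      rw [gammaH]; exact div_pos (by linarith) (by linarith)
    intro τ1 h1 τ2 h2 h12
    simp only [Set.mem_Ioi] at h1 h2
    have hx21 : Real.exp (-dH κ ξ ρ u * τ2) < Real.exp (-dH κ ξ ρ u * τ1) := by
      apply Real.exp_lt_exp.2; nlinarith
    have hx20 : 0 < Real.exp (-dH κ ξ ρ u * τ2) := Real.exp_pos _
    have hx11 : Real.exp (-dH κ ξ ρ u * τ1) < 1 := by
      rw [Real.exp_lt_one_iff]; nlinarith
    have hD1 : 0 < 1 - gammaH κ ξ ρ u * Real.exp (-dH κ ξ ρ u * τ1) := by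
      linarith [mul_pos (sub_pos.2 hγ1) (Real.exp_pos (-dH κ ξ ρ u * τ1))]
    have hD2 : 0 < 1 - gammaH κ ξ ρ u * Real.exp (-dH κ ξ ρ u * τ2) := by
      linarith [mul_pos (sub_pos.2 hγ1) hx20]
    simp only [BH]
    apply mul_lt_mul_of_pos_left _ (div_pos (by linarith) hξ2)
    rw [div_lt_div_iff₀ hD1 hD2]
    linarith [mul_pos (sub_pos.2 hγ1) (sub_pos.2 hx21)]
  · -- (d)
    intro u hu
    obtain ⟨hul, hur⟩ := hu
    obtain ⟨hm, hd0, hd2, hγ0', hγ1⟩ := aux_facts κ ξ ρ u hκ hξ hρ2 hκρξ hul hur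
    constructor
    · have hlin : Tendsto (fun τ : ℝ => dH κ ξ ρ u * τ) atTop atTop :=
        Tendsto.const_mul_atTop hd0 tendsto_id
      have hexp : Tendsto (fun τ : ℝ => Real.exp (-dH κ ξ ρ u * τ)) atTop (𝓝 0) := by
        refine (Real.tendsto_exp_atBot.comp (tendsto_neg_atTop_atBot.comp hlin)).congr fun τ => ?_
        show Real.exp (-(dH κ ξ ρ u * τ)) = Real.exp (-dH κ ξ ρ u * τ)
        rw [neg_mul]
      have hnum : Tendsto (fun τ : ℝ => 1 - Real.exp (-dH κ ξ ρ u * τ)) atTop (𝓝 1) := by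
        simpa using tendsto_const_nhds.sub hexp
      have hden : Tendsto (fun τ : ℝ => 1 - gammaH κ ξ ρ u * Real.exp (-dH κ ξ ρ u * τ))
          atTop (𝓝 1) := by
        simpa using tendsto_const_nhds.sub (hexp.const_mul (gammaH κ ξ ρ u))
      have hg : Tendsto (fun τ : ℝ => (1 - Real.exp (-dH κ ξ ρ u * τ)) /
          (1 - gammaH κ ξ ρ u * Real.exp (-dH κ ξ ρ u * τ))) atTop (𝓝 1) := by
        have := hnum.div hden one_ne_zero
        rw [div_one] at this
        exact this
      have := hg.const_mul ((κ - ρ*ξ*u - dH κ ξ ρ u) / ξ^2)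
      simpa [BH, mul_one] using this
    · rw [VH]; field_simp
  · -- (e)
    intro u hu hV τ hτ
    obtain ⟨hul, hur⟩ := hu
    obtain ⟨hm, hd0, hd2, hγ0', hγ1⟩ := aux_facts κ ξ ρ u hκ hξ hρ2 hκρξ hul hur
    have hβ : 0 ≤ betaT κ ξ t := by
      rw [betaT]
      apply mul_nonneg (by positivity)
      have : Real.exp (-κ*t) ≤ 1 := by
        rw [Real.exp_le_one_iff]; nlinarith
      linarith
    set F : ℝ := 2 * betaT κ ξ t * ((κ - ρ*ξ*u - dH κ ξ ρ u) / ξ^2) with hFdef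
    have hid : κ * θ * F = 2 * betaT κ ξ t * VH κ θ ξ ρ u := by
      rw [hFdef, VH]; field_simp
    have hF1 : F < 1 := by
      have hκθ : 0 < κ * θ := mul_pos hκ hθ
      have h2 : κ * θ * F < κ * θ * 1 := by rw [hid, mul_one]; exact hV
      exact lt_of_mul_lt_mul_left (by linarith) hκθ.le
    have hx0 : 0 < Real.exp (-dH κ ξ ρ u * τ) := Real.exp_pos _
    have hx1 : Real.exp (-dH κ ξ ρ u * τ) < 1 := by
      rw [Real.exp_lt_one_iff]; nlinarith
    have hden : 0 < 1 - gammaH κ ξ ρ u * Real.exp (-dH κ ξ ρ u * τ) := by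
      linarith [mul_pos (sub_pos.2 hγ1) hx0]
    set g : ℝ := (1 - Real.exp (-dH κ ξ ρ u * τ)) /
      (1 - gammaH κ ξ ρ u * Real.exp (-dH κ ξ ρ u * τ)) with hgdef
    have hg0 : 0 < g := div_pos (by linarith) hden
    have hg1 : g < 1 := by
      rw [hgdef, div_lt_one hden]
      linarith [mul_pos (sub_pos.2 hγ1) hx0]
    have hBg : 2 * betaT κ ξ t * BH κ ξ ρ u τ = F * g := by
      rw [BH, hFdef, hgdef]; ring
    rw [hBg]
    rcases le_or_gt F 0 with hF | hF
    · calc F * g ≤ 0 := mul_nonpos_of_nonpos_of_nonneg hF hg0.le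
        _ < 1 := one_pos
    · calc F * g < F * 1 := by exact mul_lt_mul_of_pos_left hg1 hF
        _ ≤ 1 := by linarith
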